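/- Let k ≥ 3 and let G be a k-connected graph such that every independent set of cardinality k is a vertex cut, with an independent set A = {x_1, ..., x_{k+1}}. Let G_i be the union of all components of G - (A \ {x_i}) not containing x_i. Then V(G) = A ∪ V(G_1) ∪ ... ∪ V(G_{k+1}). -/

import Mathlib

open SimpleGraph

/-- `G - S` is disconnected: some two remaining vertices are not connected. -/
def IsVertexCut {V : Type*} (G : SimpleGraph V) (S : Set V) : Prop :=
  ¬ (G.induce Sᶜ).Preconnected

/-- `G` is `k`-connected. -/
def KConnected {V : Type*} [Fintype V] (G : SimpleGraph V) (k : ℕ) : Prop :=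
  k < Fintype.card V ∧ ∀ S : Finset V, S.card < k → ¬ IsVertexCut G ↑S

/-- `S` is an independent set of `G`. -/
def IsIndep {V : Type*} (G : SimpleGraph V) (S : Set V) : Prop :=
  S.Pairwise fun u v => ¬ G.Adj u v

/-- The set of vertices of `G - S` lying in components other than the one containing `x`:
vertices outside `S` that are not reachable from `x` in `G - S`. -/
def outsideComponent {V : Type*} (G : SimpleGraph V) (S : Set V) (x : V) : Set V :=
  {v | ∃ hv : v ∈ Sᶜ, ∀ hx : x ∈ Sᶜ, ¬ (G.induce Sᶜ).Reachable ⟨v, hv⟩ ⟨x, hx⟩}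

namespace Stmt3Aux

variable {V : Type} {G : SimpleGraph V}

/-- Reachability in `G` by a walk avoiding `S`. -/
def Reach (G : SimpleGraph V) (S : Set V) (a b : V) : Prop :=
  ∃ p : G.Walk a b, ∀ w ∈ p.support, w ∉ S

lemma reach_refl {S : Set V} {a : V} (ha : a ∉ S) : Reach G S a a :=
  ⟨Walk.nil, by simpa using ha⟩

lemma reach_symm {S : Set V} {a b : V} (h : Reach G S a b) : Reach G S b a := by
  obtain ⟨p, hp⟩ := h
  exact ⟨p.reverse, fun w hw => hp w (by simpa [Walk.support_reverse] using hw)⟩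

lemma reach_trans {S : Set V} {a b c : V} (h1 : Reach G S a b) (h2 : Reach G S b c) :
    Reach G S a c := by
  obtain ⟨p, hp⟩ := h1
  obtain ⟨q, hq⟩ := h2
  refine ⟨p.append q, fun w hw => ?_⟩
  rcases (Walk.mem_support_append_iff p q).mp hw with h | h
  · exact hp w h
  · exact hq w h

lemma reach_mono {S S' : Set V} {a b : V} (hss : S ⊆ S') (h : Reach G S' a b) :
    Reach G S a b := by
  obtain ⟨p, hp⟩ := h
  exact ⟨p, fun w hw hws => hp w hw (hss hws)⟩

lemma reach_adj {S : Set V} {a b : V} (h : G.Adj a b) (ha : a ∉ S) (hb : b ∉ S) :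
    Reach G S a b :=
  ⟨Walk.cons h Walk.nil, by
    intro w hw
    simp only [Walk.support_cons, Walk.support_nil, List.mem_cons,
      List.mem_singleton] at hw
    rcases hw with rfl | rfl | hw
    · exact ha
    · exact hb
    · simp at hw⟩

lemma reach_end_not_mem {S : Set V} {a b : V} (h : Reach G S a b) : b ∉ S := by
  obtain ⟨p, hp⟩ := h
  exact hp b p.end_mem_support

lemma reach_of_mem_support {S : Set V} {a b w : V} (p : G.Walk a b)
    (hp : ∀ u ∈ p.support, u ∉ S) (hw : w ∈ p.support) : Reach G S a w := by
  classical
  exact ⟨p.takeUntil w hw, fun u hu => hp u (Walk.support_takeUntil_subset p hw hu)⟩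

lemma reach_of_induce {S : Set V} :
    ∀ {u w : ↥Sᶜ}, (G.induce Sᶜ).Reachable u w → Reach G S u.1 w.1 := by
  intro u w h
  obtain ⟨p⟩ := h
  induction p with
  | @nil a => exact reach_refl (by exact a.2)
  | @cons a d w h q ih =>
    exact reach_trans (reach_adj h a.2 d.2) ih

lemma induce_of_reach {S : Set V} :
    ∀ {a b : V} (p : G.Walk a b), (∀ w ∈ p.support, w ∉ S) →
      ∀ (ha : a ∈ Sᶜ) (hb : b ∈ Sᶜ), (G.induce Sᶜ).Reachable ⟨a, ha⟩ ⟨b, hb⟩ := by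
  intro a b p
  induction p with
  | nil => intro _ ha hb; exact Reachable.refl _
  | @cons a d b h q ih =>
    intro hp ha hb
    have hd : d ∈ Sᶜ := hp d (by simp)
    have hadj : (G.induce Sᶜ).Adj ⟨a, ha⟩ ⟨d, hd⟩ := h
    exact hadj.reachable.trans (ih (fun w hw => hp w (by simp [hw])) hd hb)

lemma reach_iff_induce {S : Set V} {a b : V} (ha : a ∈ Sᶜ) (hb : b ∈ Sᶜ) :
    Reach G S a b ↔ (G.induce Sᶜ).Reachable ⟨a, ha⟩ ⟨b, hb⟩ := by
  constructor
  · rintro ⟨p, hp⟩; exact induce_of_reach p hp ha hb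
  · exact reach_of_induce

/-- First place where a walk meets `A'`. -/
lemma firstHit {A' : Set V} :
    ∀ {a b : V} (p : G.Walk a b), a ∉ A' → (∃ w ∈ p.support, w ∈ A') →
      ∃ h, h ∈ A' ∧ h ∈ p.support ∧ ∃ c, G.Adj c h ∧
        ∃ q : G.Walk a c, (∀ w ∈ q.support, w ∈ p.support) ∧ (∀ w ∈ q.support, w ∉ A') := by
  intro a b p
  induction p with
  | nil =>
    intro ha hex
    obtain ⟨w, hw, hwA⟩ := hex
    simp only [Walk.support_nil, List.mem_singleton] at hw
    subst hw; exact absurd hwA ha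
  | @cons a d b h q ih =>
    intro ha hex
    by_cases hd : d ∈ A'
    · refine ⟨d, hd, by simp, a, h, Walk.nil, ?_, ?_⟩
      · intro w hw; simp at hw; subst hw; simp
      · intro w hw; simp at hw; subst hw; exact ha
    · have hex' : ∃ w ∈ q.support, w ∈ A' := by
        obtain ⟨w, hw, hwA⟩ := hex
        simp only [Walk.support_cons, List.mem_cons] at hw
        rcases hw with rfl | hw
        · exact absurd hwA ha
        · exact ⟨w, hw, hwA⟩
      obtain ⟨h', hA', hsup, c, hadj, r, hrs, hrA⟩ := ih hd hex'
      refine ⟨h', hA', by simp [hsup], c, hadj, Walk.cons h r, ?_, ?_⟩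
      · intro w hw
        simp only [Walk.support_cons, List.mem_cons] at hw ⊢
        rcases hw with rfl | hw
        · exact Or.inl rfl
        · exact Or.inr (hrs w hw)
      · intro w hw
        simp only [Walk.support_cons, List.mem_cons] at hw
        rcases hw with rfl | hw
        · exact ha
        · exact hrA w hw

lemma reach_append_adj {S : Set V} {a c t : V} (h : Reach G S a c) (hadj : G.Adj c t)
    (ht : t ∉ S) : Reach G S a t :=
  reach_trans h (reach_adj hadj (reach_end_not_mem h) ht)

/-- The heart of the argument: there is no vertex `v` outside `A` that can reach every
`x i` in `G - (A \ {x i})`. -/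
lemma main_contra {k : ℕ} (hk : 3 ≤ k) [Fintype V]
    (hconn : KConnected G k)
    (hcut : ∀ S : Finset V, IsIndep G ↑S → S.card = k → IsVertexCut G ↑S)
    (x : Fin (k + 1) → V) (hinj : Function.Injective x)
    (hA : IsIndep G (Set.range x))
    (v : V) (hvA : v ∉ Set.range x)
    (hall : ∀ i, Reach G (Set.range x \ {x i}) v (x i)) : False := by
  classical
  set A := Set.range x with hAdef
  have hxA : ∀ i, x i ∈ A := fun i => ⟨i, rfl⟩
  have hxdiff : ∀ i, x i ∉ A \ {x i} := fun i h => h.2 rfl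
  -- Finset versions of A \ {x i}
  have coeB : ∀ i : Fin (k + 1),
      (↑(Finset.image x (Finset.univ.erase i)) : Set V) = A \ {x i} := by
    intro i
    ext w
    simp only [Finset.coe_image, Finset.coe_erase, Finset.coe_univ, Set.mem_image,
      Set.mem_diff, Set.mem_diff, Set.mem_singleton_iff]
    constructor
    · rintro ⟨l, hl, rfl⟩
      refine ⟨⟨l, rfl⟩, fun h => ?_⟩
      exact (by simpa using hl : l ≠ i) (hinj h)
    · rintro ⟨⟨l, rfl⟩, hne⟩
      exact ⟨l, by simpa using fun h : l = i => hne (by rw [h]), rfl⟩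
  have cardB : ∀ i : Fin (k + 1), (Finset.image x (Finset.univ.erase i)).card = k := by
    intro i
    rw [Finset.card_image_of_injective _ hinj, Finset.card_erase_of_mem (Finset.mem_univ i)]
    simp
  have indepB : ∀ i : Fin (k + 1), IsIndep G ↑(Finset.image x (Finset.univ.erase i)) := by
    intro i
    rw [coeB i]
    exact hA.mono Set.diff_subset
  -- For each i, pick a vertex z i outside A not reachable to x i in G - (A \ {x i}).
  have hz : ∀ i : Fin (k + 1), ∃ zi, zi ∉ A ∧ ¬ Reach G (A \ {x i}) zi (x i) := by
    intro i
    have hcut_i := hcut _ (indepB i) (cardB i)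
    rw [IsVertexCut, coeB i] at hcut_i
    rw [Preconnected] at hcut_i
    push_neg at hcut_i
    obtain ⟨u, w, huw⟩ := hcut_i
    have hxmem : x i ∈ (A \ {x i})ᶜ := hxdiff i
    have hur : ¬ Reach G (A \ {x i}) u.1 (x i) ∨ ¬ Reach G (A \ {x i}) w.1 (x i) := by
      by_contra hcon
      push_neg at hcon
      exact huw (((reach_iff_induce u.2 hxmem).mp hcon.1).trans
        ((reach_iff_induce w.2 hxmem).mp hcon.2).symm)
    rcases hur with h | h
    · have hne : u.1 ≠ x i := by
        intro heq
        exact h (by rw [heq]; exact reach_refl (hxdiff i))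
      exact ⟨u.1, fun hmem => u.2 ⟨hmem, hne⟩, h⟩
    · have hne : w.1 ≠ x i := by
        intro heq
        exact h (by rw [heq]; exact reach_refl (hxdiff i))
      exact ⟨w.1, fun hmem => w.2 ⟨hmem, hne⟩, h⟩
  choose z hzA hzR using hz
  -- attachment lemma: a walk from a ∉ A to x i avoiding A \ {x i} yields a neighbor of x i
  -- in a's component of G - A.
  have attach : ∀ (i : Fin (k + 1)) (a : V), a ∉ A → Reach G (A \ {x i}) a (x i) →
      ∃ c, Reach G A a c ∧ G.Adj c (x i) := by
    intro i a haA hr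
    obtain ⟨p, hp⟩ := hr
    obtain ⟨h, hhA, hhsup, c, hadj, q, _, hqA⟩ :=
      firstHit p haA ⟨x i, p.end_mem_support, hxA i⟩
    have hhi : h = x i := by
      by_contra hne
      exact hp h hhsup ⟨hhA, hne⟩
    exact ⟨c, ⟨q, hqA⟩, hhi ▸ hadj⟩
  -- the fragment of z j attaches to every x i with i ≠ j
  have attach_z : ∀ j i : Fin (k + 1), i ≠ j → ∃ c, Reach G A (z j) c ∧ G.Adj c (x i) := by
    intro j i hij
    by_contra hno
    have hnoj : ¬ ∃ c, Reach G A (z j) c ∧ G.Adj c (x j) := by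
      rintro ⟨c, hrc, hadj⟩
      have h1 : Reach G (A \ {x j}) (z j) c := reach_mono Set.diff_subset hrc
      exact hzR j (reach_append_adj h1 hadj (hxdiff j))
    -- use (k-1)-sized set A \ {x i, x j}
    set T : Finset V := (Finset.image x (Finset.univ.erase i)).erase (x j) with hTdef
    have hxjB : x j ∈ Finset.image x (Finset.univ.erase i) :=
      Finset.mem_image.mpr ⟨j, Finset.mem_erase.mpr ⟨fun h => hij h.symm, Finset.mem_univ j⟩, rfl⟩
    have hcardT : T.card < k := by
      rw [hTdef, Finset.card_erase_of_mem hxjB, cardB i]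
      omega
    have hcoeT : (↑T : Set V) = (A \ {x i}) \ {x j} := by
      rw [hTdef, Finset.coe_erase, coeB i]
    have hpre := hconn.2 T hcardT
    rw [IsVertexCut, not_not] at hpre
    have hzjT : z j ∈ (↑T : Set V)ᶜ := by
      rw [hcoeT]; intro hmem; exact hzA j hmem.1.1
    have hxjT : x j ∈ (↑T : Set V)ᶜ := by
      rw [hcoeT]; intro hmem; exact hmem.2 rfl
    have hrT : Reach G ↑T (z j) (x j) :=
      (reach_iff_induce hzjT hxjT).mpr (hpre ⟨z j, hzjT⟩ ⟨x j, hxjT⟩)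
    obtain ⟨p, hp⟩ := hrT
    obtain ⟨h, hhA, hhsup, c, hadj, q, _, hqA⟩ :=
      firstHit p (hzA j) ⟨x j, p.end_mem_support, hxA j⟩
    have hhT : h ∉ (↑T : Set V) := hp h hhsup
    rw [hcoeT] at hhT
    have : h = x i ∨ h = x j := by
      by_contra hcon
      push_neg at hcon
      exact hhT ⟨⟨hhA, hcon.1⟩, hcon.2⟩
    rcases this with rfl | rfl
    · exact hno ⟨c, ⟨q, hqA⟩, hadj⟩
    · exact hnoj ⟨c, ⟨q, hqA⟩, hadj⟩
  have reach_zx : ∀ j i : Fin (k + 1), i ≠ j → Reach G (A \ {x i}) (z j) (x i) := by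
    intro j i hij
    obtain ⟨c, hrc, hadj⟩ := attach_z j i hij
    exact reach_append_adj (reach_mono Set.diff_subset hrc) hadj (hxdiff i)
  -- the z's lie in pairwise distinct fragments of G - A, all distinct from v's fragment
  have sep : ∀ i j : Fin (k + 1), i ≠ j → ¬ Reach G A (z i) (z j) := by
    intro i j hij h
    exact hzR i (reach_trans (reach_mono Set.diff_subset h) (reach_zx j i hij))
  have sepv : ∀ i, ¬ Reach G A (z i) v := by
    intro i h
    exact hzR i (reach_trans (reach_mono Set.diff_subset h) (hall i))
  have sepv' : ∀ i, ¬ Reach G A v (z i) := fun i h => sepv i (reach_symm h)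
  have hzinj : Function.Injective z := by
    intro i j hij
    by_contra hne
    exact sep i j hne (hij ▸ reach_refl (hzA i))
  have hzv : ∀ i, z i ≠ v := by
    intro i heq
    exact sepv i (heq ▸ reach_refl (hzA i))
  -- the independent set S = {z j : j ≠ 0}
  set j₀ : Fin (k + 1) := 0 with hj₀
  set S : Finset V := Finset.image z (Finset.univ.erase j₀) with hSdef
  have memS : ∀ w : V, w ∈ (↑S : Set V) ↔ ∃ l, l ≠ j₀ ∧ z l = w := by
    intro w
    simp only [hSdef, Finset.coe_image, Finset.coe_erase, Finset.coe_univ, Set.mem_image]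
    constructor
    · rintro ⟨l, hl, rfl⟩; exact ⟨l, by simpa using hl, rfl⟩
    · rintro ⟨l, hl, rfl⟩; exact ⟨l, by simpa using hl, rfl⟩
  have cardS : S.card = k := by
    rw [hSdef, Finset.card_image_of_injective _ hzinj,
      Finset.card_erase_of_mem (Finset.mem_univ j₀)]
    simp
  have hxS : ∀ i, x i ∉ (↑S : Set V) := by
    intro i hmem
    obtain ⟨l, _, hl⟩ := (memS (x i)).mp hmem
    exact hzA l (hl ▸ hxA i)
  have hvS : v ∉ (↑S : Set V) := by
    intro hmem
    obtain ⟨l, _, hl⟩ := (memS v).mp hmem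
    exact hzv l hl
  have indepS : IsIndep G ↑S := by
    intro u hu w hw hne hadj
    obtain ⟨l, _, rfl⟩ := (memS u).mp hu
    obtain ⟨m, _, rfl⟩ := (memS w).mp hw
    have hlm : l ≠ m := fun h => hne (by rw [h])
    exact sep l m hlm (reach_adj hadj (hzA l) (hzA m))
  have hScut := hcut S indepS cardS
  rw [IsVertexCut] at hScut
  apply hScut
  -- now prove that G - S is in fact preconnected, a contradiction
  -- first: v reaches every x i avoiding S
  have keyv : ∀ w, Reach G A v w → w ∉ (↑S : Set V) := by
    intro w hr hmem
    obtain ⟨l, _, rfl⟩ := (memS w).mp hmem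
    exact sepv' l hr
  have reach_vx : ∀ i, Reach G ↑S v (x i) := by
    intro i
    obtain ⟨p, hp⟩ := hall i
    obtain ⟨h, hhA, hhsup, c, hadj, q, _, hqA⟩ :=
      firstHit p hvA ⟨x i, p.end_mem_support, hxA i⟩
    have hhi : h = x i := by
      by_contra hne
      exact hp h hhsup ⟨hhA, hne⟩
    have hvc : Reach G ↑S v c :=
      ⟨q, fun w hw => keyv w (reach_of_mem_support q hqA hw)⟩
    exact reach_append_adj hvc (hhi ▸ hadj) (hxS i)
  -- second: every vertex outside S reaches v avoiding S
  have main : ∀ u, u ∉ (↑S : Set V) → Reach G ↑S u v := by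
    intro u huS
    by_cases huA : u ∈ A
    · obtain ⟨i, rfl⟩ := huA
      exact reach_symm (reach_vx i)
    · -- find a walk from u to v avoiding the z's in u's fragment
      have hwalk : ∃ p : G.Walk u v, ∀ w ∈ p.support, Reach G A u w → w ∉ (↑S : Set V) := by
        by_cases hcz : ∃ l, l ≠ j₀ ∧ Reach G A u (z l)
        · obtain ⟨l, hl, hrz⟩ := hcz
          have hcard1 : ({z l} : Finset V).card < k := by simp; omega
          have hpre := hconn.2 {z l} hcard1
          rw [IsVertexCut, not_not] at hpre
          have huT : u ∈ (↑({z l} : Finset V) : Set V)ᶜ := by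
            simp only [Finset.coe_singleton, Set.mem_compl_iff, Set.mem_singleton_iff]
            intro heq
            exact huS (heq ▸ ((memS (z l)).mpr ⟨l, hl, rfl⟩))
          have hvT : v ∈ (↑({z l} : Finset V) : Set V)ᶜ := by
            simp only [Finset.coe_singleton, Set.mem_compl_iff, Set.mem_singleton_iff]
            exact fun heq => hzv l heq.symm
          obtain ⟨p, hp⟩ := (reach_iff_induce huT hvT).mpr (hpre ⟨u, huT⟩ ⟨v, hvT⟩)
          refine ⟨p, fun w hw hrw hmem => ?_⟩
          obtain ⟨m, hm, rfl⟩ := (memS w).mp hmem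
          have hml : m = l := by
            by_contra hne
            exact sep l m (fun h => hne h.symm) (reach_trans (reach_symm hrz) hrw)
          apply hp (z m) hw
          simp [hml]
        · have hcard0 : (∅ : Finset V).card < k := by simp; omega
          have hpre := hconn.2 ∅ hcard0
          rw [IsVertexCut, not_not] at hpre
          have huT : u ∈ (↑(∅ : Finset V) : Set V)ᶜ := by simp
          have hvT : v ∈ (↑(∅ : Finset V) : Set V)ᶜ := by simp
          obtain ⟨p, hp⟩ := (reach_iff_induce huT hvT).mpr (hpre ⟨u, huT⟩ ⟨v, hvT⟩)
          refine ⟨p, fun w hw hrw hmem => ?_⟩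
          obtain ⟨m, hm, rfl⟩ := (memS w).mp hmem
          exact hcz ⟨m, hm, hrw⟩
      obtain ⟨p, hp⟩ := hwalk
      by_cases hhit : ∃ w ∈ p.support, w ∈ A
      · obtain ⟨h, hhA, hhsup, c, hadj, q, hqsub, hqA⟩ := firstHit p huA hhit
        obtain ⟨i, rfl⟩ := hhA
        have huc : Reach G ↑S u c :=
          ⟨q, fun w hw => hp w (hqsub w hw) (reach_of_mem_support q hqA hw)⟩
        exact reach_trans (reach_append_adj huc hadj (hxS i)) (reach_symm (reach_vx i))
      · push_neg at hhit
        exact ⟨p, fun w hw => hp w hw (reach_of_mem_support p hhit hw)⟩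
  -- conclude preconnectedness
  intro a b
  obtain ⟨a, ha⟩ := a
  obtain ⟨b, hb⟩ := b
  have hra : Reach G ↑S a v := main a ha
  have hrb : Reach G ↑S b v := main b hb
  exact (reach_iff_induce ha hb).mp (reach_trans hra (reach_symm hrb))

end Stmt3Aux

theorem stmt3 (k : ℕ) (hk : 3 ≤ k) (V : Type) [Fintype V] (G : SimpleGraph V)
    (hconn : KConnected G k)
    (hcut : ∀ S : Finset V, IsIndep G ↑S → S.card = k → IsVertexCut G ↑S)
    (x : Fin (k + 1) → V) (hinj : Function.Injective x)
    (hA : IsIndep G (Set.range x)) :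
    Set.range x ∪ (⋃ i : Fin (k + 1), outsideComponent G (x '' {l | l ≠ i}) (x i)) =
      Set.univ := by
  classical
  open Stmt3Aux in
  rw [Set.eq_univ_iff_forall]
  intro v
  by_cases hvA : v ∈ Set.range x
  · exact Or.inl hvA
  · have himg : ∀ i : Fin (k + 1), x '' {l | l ≠ i} = Set.range x \ {x i} := by
      intro i
      ext w
      constructor
      · rintro ⟨l, hl, rfl⟩
        exact ⟨⟨l, rfl⟩, fun h => hl (hinj (by simpa using h))⟩
      · rintro ⟨⟨l, rfl⟩, hne⟩
        exact ⟨l, fun h => hne (by simp [h]), rfl⟩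
    by_cases hall : ∀ i, Stmt3Aux.Reach G (Set.range x \ {x i}) v (x i)
    · exact absurd (Stmt3Aux.main_contra hk hconn hcut x hinj hA v hvA hall) (fun h => h)
    · push_neg at hall
      obtain ⟨i, hi⟩ := hall
      refine Or.inr (Set.mem_iUnion.mpr ⟨i, ?_⟩)
      rw [outsideComponent, himg i, Set.mem_ofPred_eq]
      have hv : v ∈ (Set.range x \ {x i})ᶜ := fun h => hvA h.1
      refine ⟨hv, fun hx hr => hi ?_⟩
      exact (Stmt3Aux.reach_iff_induce hv hx).mpr hr
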